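/- arXiv:1602.07112 — 2 statements merged into one kernel-verified Lean document; each statement's English description precedes it below -/
import Mathlib

section
/- Let K ≥ 1, and let f = (f_1,...,f_K) be a vector of positive reals with ∑_k f_k = 1. Define a sequence π : ℕ → {1,...,K} recursively by choosing π_n ∈ argmin_k (d_k(n-1)+1)/f_k (ties broken arbitrarily), where d_k(n) = #{n' ≤ n : π_{n'} = k}. Then for all n ≥ 0 and all k, d_k(n) ≤ (n + K - 1)·f_k. -/
/-- The greedy chunk-request sequence is `f`-upper balanced:
`d k n ≤ (n + K - 1) * f k` for all `n, k`. -/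
theorem greedy_is_upper_balanced
    (K : ℕ) (hK : 1 ≤ K) (f : Fin K → ℝ)
    (hf : ∀ k, 0 < f k) (hsum : ∑ k, f k = 1)
    (π : ℕ → Fin K)
    (d : Fin K → ℕ → ℕ)
    (hd : ∀ k n, d k n = ((Finset.Icc 1 n).filter (fun m => π m = k)).card)
    (hgreedy : ∀ n, 1 ≤ n → ∀ k,
      ((d (π n) (n - 1) : ℝ) + 1) / f (π n) ≤ ((d k (n - 1) : ℝ) + 1) / f k) :
    ∀ n k, (d k n : ℝ) ≤ ((n : ℝ) + K - 1) * f k := by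
  have hK1 : (1 : ℝ) ≤ K := by exact_mod_cast hK
  -- total count
  have hsumd : ∀ n, ∑ j, d j n = n := by
    intro n
    simp_rw [hd]
    rw [← Finset.card_eq_sum_card_fiberwise (fun x _ => Finset.mem_univ (π x))]
    simp
  -- step relation
  have hstep : ∀ n j, d j (n + 1) = d j n + if π (n + 1) = j then 1 else 0 := by
    intro n j
    rw [hd, hd]
    have h1 : Finset.Icc 1 (n + 1) = insert (n + 1) (Finset.Icc 1 n) := by
      ext x; simp [Nat.lt_succ_iff]; omega
    have h2 : (n + 1) ∉ Finset.Icc 1 n := by simp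
    rw [h1, Finset.filter_insert]
    split <;> simp_all [Finset.card_insert_of_notMem, Nat.add_comm]
  intro n
  induction n with
  | zero =>
    intro k
    have : d k 0 = 0 := by simp [hd]
    rw [this]
    push_cast
    nlinarith [hf k]
  | succ n ih =>
    intro k
    by_cases hk : π (n + 1) = k
    · -- greedy bound
      have key : ∀ j, ((d k n : ℝ) + 1) * f j ≤ ((d j n : ℝ) + 1) * f k := by
        intro j
        have := hgreedy (n + 1) (by omega) j
        simp only [Nat.add_sub_cancel, hk] at this
        exact (div_le_div_iff₀ (hf k) (hf j)).mp this
      have hsum' := Finset.sum_le_sum (fun j (_ : j ∈ Finset.univ) => key j)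
      rw [← Finset.mul_sum, hsum, ← Finset.sum_mul] at hsum'
      have hSd : ∑ j, ((d j n : ℝ) + 1) = (n : ℝ) + K := by
        rw [Finset.sum_add_distrib]
        simp only [Finset.sum_const, Finset.card_univ, Fintype.card_fin, nsmul_eq_mul, mul_one]
        have : ∑ j, ((d j n : ℝ)) = (n : ℝ) := by
          rw [← Nat.cast_sum]
          exact_mod_cast congrArg Nat.cast (hsumd n)
        rw [this]
      rw [hSd, mul_one] at hsum'
      have : d k (n + 1) = d k n + 1 := by rw [hstep n k]; simp [hk]
      rw [this]
      push_cast
      linarith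
    · have : d k (n + 1) = d k n := by rw [hstep n k]; simp [hk]
      rw [this]
      have := ih k
      have hfk := (hf k).le
      push_cast
      nlinarith
end

section
/- Let K ≥ 1 and f_1,...,f_K > 0 with ∑_k f_k = 1, and let π be the greedy sequence defined by π_n ∈ argmin_k (d_k(n-1)+1)/f_k. Then for every n ≥ 1, the value a(n) = (d_{π_n}(n-1)+1)/f_{π_n} satisfies a(n) ≤ n - 1 + K. -/
/-- For the greedy sequence, `a(n) = (d_{π_n}(n-1)+1)/f_{π_n} ≤ n - 1 + K`. -/
theorem greedy_value_le
    (K : ℕ) (hK : 1 ≤ K) (f : Fin K → ℝ)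
    (hf : ∀ k, 0 < f k) (hsum : ∑ k, f k = 1)
    (π : ℕ → Fin K)
    (d : Fin K → ℕ → ℕ)
    (hd : ∀ k n, d k n = ((Finset.Icc 1 n).filter (fun m => π m = k)).card)
    (hgreedy : ∀ n, 1 ≤ n → ∀ k,
      ((d (π n) (n - 1) : ℝ) + 1) / f (π n) ≤ ((d k (n - 1) : ℝ) + 1) / f k) :
    ∀ n, 1 ≤ n → ((d (π n) (n - 1) : ℝ) + 1) / f (π n) ≤ (n : ℝ) - 1 + K := by
  intro n hn
  set a : ℝ := ((d (π n) (n - 1) : ℝ) + 1) / f (π n) with ha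
  have hsumd : ∑ k, (d k (n - 1) : ℝ) = (n : ℝ) - 1 := by
    have hcard : (Finset.Icc 1 (n - 1)).card =
        ∑ k, ((Finset.Icc 1 (n - 1)).filter (fun m => π m = k)).card :=
      Finset.card_eq_sum_card_fiberwise (fun x _ => Finset.mem_univ (π x))
    have : ∑ k, (d k (n - 1) : ℝ) = ((Finset.Icc 1 (n - 1)).card : ℝ) := by
      rw [hcard]; push_cast [hd]; rfl
    rw [this, Nat.card_Icc]
    have : n - 1 + 1 - 1 = n - 1 := by omega
    rw [this]
    have : (1:ℕ) ≤ n := hn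
    push_cast [Nat.cast_sub this]
    ring
  have key : ∀ k, a * f k ≤ (d k (n - 1) : ℝ) + 1 := by
    intro k
    have := hgreedy n hn k
    rw [← ha] at this
    calc a * f k ≤ (((d k (n - 1) : ℝ) + 1) / f k) * f k :=
          mul_le_mul_of_nonneg_right this (hf k).le
      _ = (d k (n - 1) : ℝ) + 1 := div_mul_cancel₀ _ (hf k).ne'
  calc a = a * ∑ k, f k := by rw [hsum, mul_one]
    _ = ∑ k, a * f k := Finset.mul_sum _ _ _
    _ ≤ ∑ k, ((d k (n - 1) : ℝ) + 1) := Finset.sum_le_sum fun k _ => key k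
    _ = (n : ℝ) - 1 + K := by
        rw [Finset.sum_add_distrib, hsumd]
        simp
end
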